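/- If the i-th row of a matrix A ∈ M(n,ℍ) is multiplied on the left by a quaternion b ∈ ℍ, then the i-th row determinant is multiplied on the left by b: rdet_i (A_{i.}(b·a_{i.})) = b · rdet_i A, for every i ∈ {1,…,n}. -/
import Mathlib


open Matrix Quaternion

noncomputable section

/-- The cycle (orbit) of `x` under `σ`, listed as `x, σ x, σ² x, …`. -/
def cyc {n : ℕ} (σ : Equiv.Perm (Fin n)) (x : Fin n) : List (Fin n) :=
  (List.range (Function.minimalPeriod (⇑σ) x)).map fun k => (σ ^ k) x

/-- The minimal representatives of the orbits of `σ` other than the orbit of `i`,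
listed in increasing order. -/
def otherMins {n : ℕ} (σ : Equiv.Perm (Fin n)) (i : Fin n) : List (Fin n) :=
  (List.finRange n).filter fun x => decide (x ∉ cyc σ i ∧ ∀ y ∈ cyc σ x, x ≤ y)

/-- The indices `1,…,n` listed according to the left-ordered cycle notation of `σ`
opening with the cycle of `i`: first the orbit of `i` (starting at `i`), then the other
orbits, ordered increasingly by their minimal elements, each starting at its minimal
element. -/
def rowList {n : ℕ} (σ : Equiv.Perm (Fin n)) (i : Fin n) : List (Fin n) :=
  cyc σ i ++ ((otherMins σ i).map (cyc σ)).flatten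

/-- The indices `1,…,n` listed according to the right-ordered cycle notation of `σ`
closing with the cycle of `j`: the orbits other than that of `j`, ordered decreasingly
by their minimal elements, each starting at its minimal element, and finally the orbit
of `j` (starting at `j`). -/
def colList {n : ℕ} (σ : Equiv.Perm (Fin n)) (j : Fin n) : List (Fin n) :=
  ((otherMins σ j).reverse.map (cyc σ)).flatten ++ cyc σ j

/-- The `i`-th row determinant of a quaternionic matrix. -/
def rdet {n : ℕ} (A : Matrix (Fin n) (Fin n) ℍ[ℝ]) (i : Fin n) : ℍ[ℝ] :=
  ∑ σ : Equiv.Perm (Fin n),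
    ((Equiv.Perm.sign σ : ℤ) : ℍ[ℝ]) * ((rowList σ i).map fun x => A x (σ x)).prod

/-- The `j`-th column determinant of a quaternionic matrix. -/
def cdet {n : ℕ} (A : Matrix (Fin n) (Fin n) ℍ[ℝ]) (j : Fin n) : ℍ[ℝ] :=
  ∑ σ : Equiv.Perm (Fin n),
    ((Equiv.Perm.sign σ : ℤ) : ℍ[ℝ]) * ((colList σ j).map fun x => A x (σ x)).prod

/-- All minimal orbit representatives of `σ`, in increasing order. -/
def allMins {n : ℕ} (σ : Equiv.Perm (Fin n)) : List (Fin n) :=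
  (List.finRange n).filter fun x => decide (∀ y ∈ cyc σ x, x ≤ y)

/-- The determinant of a (Hermitian) quaternionic matrix: the common value of all the
row and column determinants. -/
def detH {n : ℕ} (A : Matrix (Fin n) (Fin n) ℍ[ℝ]) : ℍ[ℝ] :=
  ∑ σ : Equiv.Perm (Fin n),
    ((Equiv.Perm.sign σ : ℤ) : ℍ[ℝ]) *
      ((((allMins σ).map (cyc σ)).flatten).map fun x => A x (σ x)).prod

/-- The double determinant. -/
def ddet {n : ℕ} (A : Matrix (Fin n) (Fin n) ℍ[ℝ]) : ℍ[ℝ] :=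
  detH (Aᴴ * A)

/-- The index of `j` in `Fin m` after deleting the index `i` from `Fin (m+1)`;
it satisfies `i.succAbove (unemb i j h) = j`. -/
def unemb {m : ℕ} (i j : Fin (m + 1)) (h : j ≠ i) : Fin m :=
  if hlt : (j : ℕ) < (i : ℕ) then ⟨(j : ℕ), by have := i.isLt; omega⟩
  else ⟨(j : ℕ) - 1, by
    have h1 := j.isLt
    have h2 : (i : ℕ) ≠ (j : ℕ) := fun hc => h (Fin.ext hc.symm)
    omega⟩

lemma minPeriod_pos {n : ℕ} (σ : Equiv.Perm (Fin n)) (x : Fin n) :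
    0 < Function.minimalPeriod (⇑σ) x := by
  apply Function.IsPeriodicPt.minimalPeriod_pos (n := orderOf σ) (orderOf_pos σ)
  unfold Function.IsPeriodicPt
  rw [← Equiv.Perm.coe_pow, pow_orderOf_eq_one]
  rfl

lemma mem_cyc_iff {n : ℕ} (σ : Equiv.Perm (Fin n)) (x y : Fin n) :
    y ∈ cyc σ x ↔ ∃ k : ℕ, (σ ^ k) x = y := by
  constructor
  · rintro h
    simp only [cyc, List.mem_map, List.mem_range] at h
    obtain ⟨k, _, hk⟩ := h
    exact ⟨k, hk⟩
  · rintro ⟨k, rfl⟩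
    simp only [cyc, List.mem_map, List.mem_range]
    refine ⟨k % Function.minimalPeriod (⇑σ) x, Nat.mod_lt _ (minPeriod_pos σ x), ?_⟩
    rw [Equiv.Perm.coe_pow, Equiv.Perm.coe_pow]
    exact Function.iterate_mod_minimalPeriod_eq

lemma mem_cyc_self {n : ℕ} (σ : Equiv.Perm (Fin n)) (x : Fin n) : x ∈ cyc σ x :=
  (mem_cyc_iff σ x x).2 ⟨0, rfl⟩

lemma cyc_symm {n : ℕ} (σ : Equiv.Perm (Fin n)) {x y : Fin n} (h : y ∈ cyc σ x) :
    x ∈ cyc σ y := by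
  obtain ⟨k, rfl⟩ := (mem_cyc_iff σ x y).1 h
  refine (mem_cyc_iff σ _ x).2 ⟨orderOf σ * (k + 1) - k, ?_⟩
  rw [← Equiv.Perm.mul_apply, ← pow_add]
  have hk : orderOf σ * (k + 1) - k + k = orderOf σ * (k + 1) := by
    have : k ≤ orderOf σ * (k + 1) :=
      le_trans (Nat.le_succ k) (Nat.le_mul_of_pos_left _ (orderOf_pos σ))
    omega
  rw [hk, pow_mul, pow_orderOf_eq_one, one_pow, Equiv.Perm.coe_one, id]

lemma rowList_eq_cons {n : ℕ} (σ : Equiv.Perm (Fin n)) (i : Fin n) :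
    ∃ t : List (Fin n), rowList σ i = i :: t ∧ ∀ x ∈ t, x ≠ i := by
  obtain ⟨m, hm⟩ : ∃ m, Function.minimalPeriod (⇑σ) i = m + 1 :=
    ⟨_, (Nat.succ_pred_eq_of_pos (minPeriod_pos σ i)).symm⟩
  have hcyc : cyc σ i = i :: (List.range m).map fun k => (σ ^ (k + 1)) i := by
    rw [cyc, hm, List.range_succ_eq_map]
    simp [Function.comp]
  refine ⟨((List.range m).map fun k => (σ ^ (k + 1)) i) ++
      ((otherMins σ i).map (cyc σ)).flatten, ?_, ?_⟩
  · rw [rowList, hcyc]; rfl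
  · intro x hx
    rcases List.mem_append.1 hx with hx | hx
    · obtain ⟨k, hk, rfl⟩ := List.mem_map.1 hx
      rw [List.mem_range] at hk
      intro hcon
      have hper : Function.IsPeriodicPt (⇑σ) (k + 1) i := by
        unfold Function.IsPeriodicPt
        rw [← Equiv.Perm.coe_pow]
        exact hcon
      have := hper.minimalPeriod_le (Nat.succ_pos k)
      omega
    · obtain ⟨l, hl, hxl⟩ := List.mem_flatten.1 hx
      obtain ⟨y, hy, rfl⟩ := List.mem_map.1 hl
      have hy' : y ∉ cyc σ i := by
        simp only [otherMins, List.mem_filter, decide_eq_true_eq] at hy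
        exact hy.2.1
      intro hcon
      subst hcon
      exact hy' (cyc_symm σ hxl)

/-- If the `i`-th row of `A` is multiplied on the left by a quaternion `b`, then the
`i`-th row determinant is multiplied on the left by `b`. -/
theorem rdet_updateRow_smul_left (n : ℕ) (A : Matrix (Fin n) (Fin n) ℍ[ℝ]) (b : ℍ[ℝ])
    (i : Fin n) :
    rdet (A.updateRow i fun j => b * A i j) i = b * rdet A i := by
  unfold rdet
  rw [Finset.mul_sum]
  refine Finset.sum_congr rfl fun σ _ => ?_
  obtain ⟨t, ht, htne⟩ := rowList_eq_cons σ i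
  rw [ht]
  have htail : (t.map fun x => (A.updateRow i fun j => b * A i j) x (σ x)).prod =
      (t.map fun x => A x (σ x)).prod := by
    congr 1
    exact List.map_congr_left fun x hx => by rw [Matrix.updateRow_ne (htne x hx)]
  simp only [List.map_cons, List.prod_cons, Matrix.updateRow_self, htail]
  have hc : Commute (((Equiv.Perm.sign σ : ℤ) : ℍ[ℝ])) b := (Int.cast_commute _ b)
  rw [← mul_assoc, ← mul_assoc, hc.eq, mul_assoc, mul_assoc]
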